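/- Let m, n ≥ 3 and p ≥ 0 be integers and let BG(m,n,p) be the binocular graph: an m-cycle and an n-cycle whose distinguished vertices u₀ and v₀ are joined by a path of length p (u₀ = v₀ when p = 0). For all positive integers a, b with a/b ≥ 2 + 1/⌊min(m,n)/2⌋, the graph BG(m,n,p) is free (a,b)-choosable. -/

import Mathlib

/-- An (L,b)-coloring of `G`: each vertex gets a `b`-element subset of its list,
with disjoint sets on adjacent vertices. -/
def IsLbColoring {V : Type*} (G : SimpleGraph V) (L : V → Finset ℤ) (b : ℕ)
    (c : V → Finset ℤ) : Prop :=
  (∀ v, c v ⊆ L v) ∧ (∀ v, (c v).card = b) ∧ ∀ ⦃v w⦄, G.Adj v w → Disjoint (c v) (c w)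

/-- `G` is (a,b)-choosable. -/
def Choosable {V : Type*} (G : SimpleGraph V) (a b : ℕ) : Prop :=
  ∀ L : V → Finset ℤ, (∀ v, (L v).card = a) → ∃ c, IsLbColoring G L b c

/-- `G` is free (a,b)-choosable. -/
def FreeChoosable {V : Type*} (G : SimpleGraph V) (a b : ℕ) : Prop :=
  ∀ L : V → Finset ℤ, (∀ v, (L v).card = a) →
    ∀ v₀ : V, ∀ c₀ : Finset ℤ, c₀ ⊆ L v₀ → c₀.card = b →
      ∃ c, IsLbColoring G L b c ∧ c v₀ = c₀

/-- The cycle `C n` on vertex set `ZMod n`. -/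
def cycleGraph (n : ℕ) : SimpleGraph (ZMod n) :=
  SimpleGraph.fromRel (fun i j => j = i + 1)

/-- Label (in `ℕ`) of the `j`-th vertex (`0 ≤ j ≤ p`) of the path joining the two
cycles of the binocular graph: it starts at `u₀` (label `0`, on the `m`-cycle) and
ends at `v₀` (label `m+p-1` if `p ≥ 1`, and `u₀ = v₀` if `p = 0`). -/
def pathV (m p j : ℕ) : ℕ :=
  if j = 0 then 0 else if j = p then (if p = 0 then 0 else m + p - 1) else m + j - 1

/-- Label of the `j`-th vertex (`0 ≤ j < n`) of the second cycle, starting at `v₀`. -/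
def cyc2V (m p j : ℕ) : ℕ :=
  if j = 0 then (if p = 0 then 0 else m + p - 1) else m + p - 1 + j

/-- Adjacency of the binocular graph BG(m,n,p): the `m`-cycle on labels
`0,…,m-1`, the path `u₀,x₁,…,x_{p-1},v₀`, and the `n`-cycle through `v₀`. -/
def bgRel (m n p : ℕ) : ℕ → ℕ → Prop := fun x y =>
  (∃ i < m, x = i ∧ y = (i + 1) % m) ∨
  (∃ j < p, x = pathV m p j ∧ y = pathV m p (j + 1)) ∨
  (∃ j < n, x = cyc2V m p j ∧ y = cyc2V m p ((j + 1) % n))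

/-- The binocular graph BG(m,n,p) on its `m + n + p - 1` vertices. -/
def binocularGraph (m n p : ℕ) : SimpleGraph (Fin (m + n + p - 1)) :=
  SimpleGraph.comap Fin.val (SimpleGraph.fromRel (bgRel m n p))


/-! ### Auxiliary machinery -/

private def Hseq (L : ℕ → Finset ℤ) (F : Finset ℤ) (k : ℕ) : ℕ → Finset ℤ
  | 0 => F
  | s + 1 => L (k - s) \ Hseq L F k s

private def gseq (b : ℕ) (L : ℕ → Finset ℤ) (F : Finset ℤ) (k : ℕ) : ℕ → ℤ
  | 0 => (F.card : ℤ) - b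
  | s + 1 => gseq b L F k s + ((Hseq L F k (s + 1)).card : ℤ) - b

private lemma gseq_lb (b e k : ℕ) (L : ℕ → Finset ℤ) (F : Finset ℤ)
    (hk : 1 ≤ k)
    (hL : ∀ i, 1 ≤ i → i ≤ k → 2 * b + e ≤ (L i).card)
    (hF : b + e ≤ F.card) :
    ∀ s, s ≤ k → ((e * (s / 2) + e : ℕ) : ℤ) ≤ gseq b L F k s := by
  intro s
  induction s using Nat.strong_induction_on with
  | _ s ih =>
    match s with
    | 0 =>
      intro _
      simp only [gseq]
      have : e * (0 / 2) + e = e := by norm_num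
      rw [this]
      omega
    | 1 =>
      intro h1
      have hLk : 2 * b + e ≤ (L k).card := hL k hk le_rfl
      have hsd : (L k).card ≤ (L k \ F).card + F.card := Finset.card_le_card_sdiff_add_card
      simp only [gseq, Hseq, Nat.sub_zero]
      have : e * (1 / 2) + e = e := by norm_num
      rw [this]
      omega
    | (s + 2) =>
      intro hs2
      have ihs := ih s (by omega) (by omega)
      have hidx : 1 ≤ k - (s + 1) ∧ k - (s + 1) ≤ k := by omega
      have hLi : 2 * b + e ≤ (L (k - (s + 1))).card := hL _ hidx.1 hidx.2
      have hsd : (L (k - (s + 1))).card ≤ (L (k - (s + 1)) \ Hseq L F k (s + 1)).card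
          + (Hseq L F k (s + 1)).card := Finset.card_le_card_sdiff_add_card
      have e1 : Hseq L F k (s + 2) = L (k - (s + 1)) \ Hseq L F k (s + 1) := rfl
      have e2 : gseq b L F k (s + 2) =
          gseq b L F k (s + 1) + ((Hseq L F k (s + 2)).card : ℤ) - b := rfl
      have e3 : gseq b L F k (s + 1) =
          gseq b L F k s + ((Hseq L F k (s + 1)).card : ℤ) - b := rfl
      have key : e * ((s + 2) / 2) + e = (e * (s / 2) + e) + e := by
        have hdiv : ((s + 2) / 2 : ℕ) = s / 2 + 1 := by omega
        rw [hdiv]; ring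
      rw [e2, e3, e1, key, Nat.cast_add]
      omega

private lemma dp (b e k : ℕ) (L : ℕ → Finset ℤ) (F : Finset ℤ)
    (hL : ∀ i, 1 ≤ i → i ≤ k → 2 * b + e ≤ (L i).card)
    (hg : ∀ s, s ≤ k → 0 ≤ gseq b L F k s) :
    ∀ d, d ≤ k → ∀ S : Finset ℤ, S.card = b →
      ((S ∩ Hseq L F k d).card : ℤ) ≤ gseq b L F k d →
      ∃ c : ℕ → Finset ℤ, c 0 = S ∧
        (∀ j, 1 ≤ j → j ≤ d → c j ⊆ L (k - d + j) ∧ (c j).card = b) ∧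
        (∀ j < d, Disjoint (c j) (c (j + 1))) ∧
        ((c d ∩ F).card : ℤ) ≤ (F.card : ℤ) - b := by
  intro d
  induction d with
  | zero =>
    intro _ S hS hbound
    exact ⟨fun _ => S, rfl, fun j h1 h0 => absurd (h1.trans h0) (by omega),
      fun j hj => absurd hj (by omega), hbound⟩
  | succ d ih =>
    intro hdk S hS hbound
    have hdk' : d ≤ k := by omega
    have hgd : 0 ≤ gseq b L F k d := hg d hdk'
    have hgd1 : 0 ≤ gseq b L F k (d + 1) := hg (d + 1) hdk
    have hLi : 2 * b + e ≤ (L (k - d)).card := hL _ (by omega) (by omega)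
    have eH : Hseq L F k (d + 1) = L (k - d) \ Hseq L F k d := rfl
    have eg : gseq b L F k (d + 1) =
        gseq b L F k d + ((Hseq L F k (d + 1)).card : ℤ) - b := rfl
    have hAcard : b + e ≤ (L (k - d) \ S).card := by
      have h := Finset.card_le_card_sdiff_add_card (s := L (k - d)) (t := S)
      omega
    have hPcard : ((Hseq L F k (d + 1)).card : ℤ) - gseq b L F k (d + 1)
        ≤ ((Hseq L F k (d + 1) \ S).card : ℤ) := by
      have h1 : (Hseq L F k (d + 1) \ S).card + (Hseq L F k (d + 1) ∩ S).card
          = (Hseq L F k (d + 1)).card := Finset.card_sdiff_add_card_inter _ _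
      have h2 : (Hseq L F k (d + 1) ∩ S).card ≤ (S ∩ Hseq L F k (d + 1)).card := by
        rw [Finset.inter_comm]
      omega
    set s : ℕ := ((b : ℤ) - gseq b L F k d).toNat with hs
    have hsz : (s : ℤ) = max ((b : ℤ) - gseq b L F k d) 0 := by rw [hs]; omega
    have hsb : s ≤ b := by omega
    have hsP : s ≤ (Hseq L F k (d + 1) \ S).card := by
      have heq : ((b : ℤ) - gseq b L F k d) = ((Hseq L F k (d + 1)).card : ℤ)
          - gseq b L F k (d + 1) := by rw [eg]; ring
      omega
    obtain ⟨T₁, hT₁P, hT₁c⟩ := Finset.exists_subset_card_eq hsP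
    have hT2pool : b - s ≤ ((L (k - d) \ S) \ T₁).card := by
      have h := Finset.card_le_card_sdiff_add_card (s := L (k - d) \ S) (t := T₁)
      omega
    obtain ⟨T₂, hT₂P, hT₂c⟩ := Finset.exists_subset_card_eq hT2pool
    have hPA : Hseq L F k (d + 1) \ S ⊆ L (k - d) \ S := by
      intro x hx
      rw [eH] at hx
      simp only [Finset.mem_sdiff] at hx ⊢
      exact ⟨hx.1.1, hx.2⟩
    have hT₁A : T₁ ⊆ L (k - d) \ S := hT₁P.trans hPA
    have hT₂A : T₂ ⊆ L (k - d) \ S := hT₂P.trans Finset.sdiff_subset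
    have hT12 : Disjoint T₁ T₂ := by
      rw [Finset.disjoint_left]
      intro x hx1 hx2
      have := hT₂P hx2
      simp only [Finset.mem_sdiff] at this
      exact this.2 hx1
    have hTcard : (T₁ ∪ T₂).card = b := by
      rw [Finset.card_union_of_disjoint hT12, hT₁c, hT₂c]
      omega
    have hTA : T₁ ∪ T₂ ⊆ L (k - d) \ S := Finset.union_subset hT₁A hT₂A
    have hST : Disjoint S (T₁ ∪ T₂) := by
      rw [Finset.disjoint_left]
      intro x hxS hxT
      have := hTA hxT
      simp only [Finset.mem_sdiff] at this
      exact this.2 hxS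
    have hTHd : (((T₁ ∪ T₂) ∩ Hseq L F k d).card : ℤ) ≤ gseq b L F k d := by
      have hsub : (T₁ ∪ T₂) ∩ Hseq L F k d ⊆ T₂ := by
        intro x hx
        simp only [Finset.mem_inter, Finset.mem_union] at hx
        rcases hx with ⟨hx1 | hx1, hx2⟩
        · exfalso
          have h' := hT₁P hx1
          rw [eH] at h'
          simp only [Finset.mem_sdiff] at h'
          exact h'.1.2 hx2
        · exact hx1
      have hc := Finset.card_le_card hsub
      omega
    obtain ⟨c', hc'0, hc'sub, hc'dis, hc'end⟩ := ih hdk' (T₁ ∪ T₂) hTcard hTHd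
    refine ⟨fun j => if j = 0 then S else c' (j - 1), rfl, ?_, ?_, ?_⟩
    · intro j h1 hj
      have hj0 : j ≠ 0 := by omega
      simp only [hj0, if_false]
      match j, h1 with
      | 1, _ =>
        constructor
        · show c' 0 ⊆ _
          rw [hc'0]
          refine hTA.trans ?_
          have hi : k - (d + 1) + 1 = k - d := by omega
          rw [hi]
          exact Finset.sdiff_subset
        · show (c' 0).card = b
          rw [hc'0]; exact hTcard
      | (j + 2), _ =>
        have := hc'sub (j + 1) (by omega) (by omega)
        have hidx2 : k - d + (j + 1) = k - (d + 1) + (j + 2) := by omega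
        rw [hidx2] at this
        simpa using this
    · intro j hj
      match j with
      | 0 =>
        show Disjoint (if (0:ℕ) = 0 then S else _) (if (1:ℕ) = 0 then S else c' (1 - 1))
        simp only [if_pos rfl, if_neg (by omega : ¬ (1:ℕ) = 0)]
        show Disjoint S (c' 0)
        rw [hc'0]; exact hST
      | (j + 1) =>
        have := hc'dis j (by omega)
        simpa using this
    · have hne : ¬ d + 1 = 0 := by omega
      simpa [hne] using hc'end

private lemma cycle_free (b e ℓ : ℕ) (hb : 0 < b) (hl : 3 ≤ ℓ) (het : b ≤ e * (ℓ / 2))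
    (L : ℕ → Finset ℤ) (hL : ∀ i < ℓ, 2 * b + e ≤ (L i).card)
    (c₀ : Finset ℤ) (hc0 : c₀ ⊆ L 0) (hc0c : c₀.card = b) :
    ∃ c : ℕ → Finset ℤ, c 0 = c₀ ∧ (∀ i < ℓ, c i ⊆ L i ∧ (c i).card = b) ∧
      (∀ i < ℓ, Disjoint (c i) (c ((i + 1) % ℓ))) := by
  set k : ℕ := ℓ - 2 with hk
  set F : Finset ℤ := L (ℓ - 1) \ c₀ with hF
  have hFc : b + e ≤ F.card := by
    rw [hF]
    have h1 := Finset.card_le_card_sdiff_add_card (s := L (ℓ - 1)) (t := c₀)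
    have h2 := hL (ℓ - 1) (by omega)
    omega
  have hLk : ∀ i, 1 ≤ i → i ≤ k → 2 * b + e ≤ (L i).card := fun i _ h2 => hL i (by omega)
  have hglb := gseq_lb b e k L F (by omega) hLk hFc
  have hg : ∀ s, s ≤ k → 0 ≤ gseq b L F k s := fun s hs => le_trans (by positivity) (hglb s hs)
  have hgk : (b : ℤ) ≤ gseq b L F k k := by
    refine le_trans ?_ (hglb k le_rfl)
    have : b ≤ e * (k / 2) + e := by
      have h2 : e * (ℓ / 2) = e * (k / 2) + e := by
        have : ℓ / 2 = k / 2 + 1 := by omega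
        rw [this]; ring
      omega
    exact_mod_cast this
  have hc0H : ((c₀ ∩ Hseq L F k k).card : ℤ) ≤ gseq b L F k k := by
    refine le_trans ?_ hgk
    have : (c₀ ∩ Hseq L F k k).card ≤ c₀.card := Finset.card_le_card Finset.inter_subset_left
    exact_mod_cast hc0c ▸ this
  obtain ⟨pc, hpc0, hpcsub, hpcdis, hpcend⟩ := dp b e k L F hLk hg k le_rfl c₀ hc0c hc0H
  have hRcard : b ≤ (F \ pc k).card := by
    have h1 : (F \ pc k).card + (F ∩ pc k).card = F.card := Finset.card_sdiff_add_card_inter _ _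
    have h2 : (F ∩ pc k).card = (pc k ∩ F).card := by rw [Finset.inter_comm]
    omega
  obtain ⟨cl, hclR, hclc⟩ := Finset.exists_subset_card_eq hRcard
  have hclF : cl ⊆ F := hclR.trans Finset.sdiff_subset
  refine ⟨fun i => if i = ℓ - 1 then cl else pc i, ?_, ?_, ?_⟩
  · simp only [if_neg (by omega : ¬ (0:ℕ) = ℓ - 1)]
    exact hpc0
  · intro i hi
    by_cases hie : i = ℓ - 1
    · simp only [hie, if_pos rfl]
      exact ⟨hclF.trans Finset.sdiff_subset, hclc⟩
    · simp only [if_neg hie]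
      rcases Nat.eq_zero_or_pos i with h0 | h0
      · subst h0
        rw [hpc0]
        exact ⟨hc0, hc0c⟩
      · have := hpcsub i (by omega) (by omega)
        rwa [Nat.sub_self, Nat.zero_add] at this
  · intro i hi
    by_cases hie : i = ℓ - 1
    · have hmod : (i + 1) % ℓ = 0 := by
        rw [hie]
        have h1 : ℓ - 1 + 1 = ℓ := by omega
        rw [h1, Nat.mod_self]
      rw [hmod, hie]
      simp only [if_pos rfl, if_neg (by omega : ¬ (0:ℕ) = ℓ - 1)]
      rw [hpc0, Finset.disjoint_left]
      intro x hx
      have := hclF hx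
      rw [hF] at this
      simp only [Finset.mem_sdiff] at this
      exact this.2
    · have hmod : (i + 1) % ℓ = i + 1 := Nat.mod_eq_of_lt (by omega)
      rw [hmod]
      by_cases hie2 : i + 1 = ℓ - 1
      · simp only [if_neg hie, if_pos hie2]
        have hik : i = k := by omega
        rw [hik, Finset.disjoint_left]
        intro x hx hx2
        have := hclR hx2
        simp only [Finset.mem_sdiff] at this
        exact this.2 hx
      · simp only [if_neg hie, if_neg hie2]
        exact hpcdis i (by omega)

private lemma cycle_free_rot (b e ℓ r : ℕ) (hb : 0 < b) (hl : 3 ≤ ℓ) (hr : r < ℓ)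
    (het : b ≤ e * (ℓ / 2))
    (L : ℕ → Finset ℤ) (hL : ∀ i < ℓ, 2 * b + e ≤ (L i).card)
    (c₀ : Finset ℤ) (hc0 : c₀ ⊆ L r) (hc0c : c₀.card = b) :
    ∃ c : ℕ → Finset ℤ, c r = c₀ ∧ (∀ i < ℓ, c i ⊆ L i ∧ (c i).card = b) ∧
      (∀ i < ℓ, Disjoint (c i) (c ((i + 1) % ℓ))) := by
  have key : ∀ x : ℕ, (r + (x + (ℓ - r)) % ℓ) % ℓ = x % ℓ := by
    intro x
    rw [Nat.add_mod_mod]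
    have : r + (x + (ℓ - r)) = x + ℓ := by omega
    rw [this, Nat.add_mod_right]
  obtain ⟨c', hc'0, hc'sub, hc'dis⟩ := cycle_free b e ℓ hb hl het
    (fun i => L ((r + i) % ℓ))
    (fun i _ => hL ((r + i) % ℓ) (Nat.mod_lt _ (by omega)))
    c₀ (by show c₀ ⊆ L ((r + 0) % ℓ); rwa [Nat.add_zero, Nat.mod_eq_of_lt hr]) hc0c
  refine ⟨fun i => c' ((i + (ℓ - r)) % ℓ), ?_, ?_, ?_⟩
  · have : (r + (ℓ - r)) % ℓ = 0 := by
      have h1 : r + (ℓ - r) = ℓ := by omega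
      rw [h1, Nat.mod_self]
    show c' ((r + (ℓ - r)) % ℓ) = c₀
    rw [this, hc'0]
  · intro i hi
    have h1 := hc'sub ((i + (ℓ - r)) % ℓ) (Nat.mod_lt _ (by omega))
    have h2 : (r + (i + (ℓ - r)) % ℓ) % ℓ = i := by rw [key, Nat.mod_eq_of_lt hi]
    rw [h2] at h1
    exact h1
  · intro i hi
    have h1 := hc'dis ((i + (ℓ - r)) % ℓ) (Nat.mod_lt _ (by omega))
    have h2 : ((i + (ℓ - r)) % ℓ + 1) % ℓ = ((i + 1) % ℓ + (ℓ - r)) % ℓ := by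
      rw [Nat.mod_add_mod, Nat.mod_add_mod]
      congr 1
      omega
    rw [h2] at h1
    exact h1

private lemma path_greedy (b : ℕ) (L : ℕ → Finset ℤ) (S : Finset ℤ) (hS : S.card = b) :
    ∀ k : ℕ, (∀ j, 1 ≤ j → j ≤ k → 2 * b ≤ (L j).card) →
    ∃ pc : ℕ → Finset ℤ, pc 0 = S ∧
      (∀ j, 1 ≤ j → j ≤ k → pc j ⊆ L j ∧ (pc j).card = b) ∧
      ∀ j < k, Disjoint (pc j) (pc (j + 1)) := by
  intro k
  induction k with
  | zero =>
    exact fun _ => ⟨fun _ => S, rfl, fun j h1 h0 => absurd (h1.trans h0) (by omega),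
      fun j hj => absurd hj (by omega)⟩
  | succ k ih =>
    intro hL
    obtain ⟨pc, hpc0, hpcsub, hpcdis⟩ := ih (fun j h1 h2 => hL j h1 (by omega))
    have hpk : (pc k).card = b := by
      rcases Nat.eq_zero_or_pos k with h0 | h0
      · rw [h0, hpc0]; exact hS
      · exact (hpcsub k (by omega) le_rfl).2
    have hpool : b ≤ (L (k + 1) \ pc k).card := by
      have h1 := Finset.card_le_card_sdiff_add_card (s := L (k + 1)) (t := pc k)
      have h2 := hL (k + 1) (by omega) le_rfl
      omega
    obtain ⟨T, hTsub, hTc⟩ := Finset.exists_subset_card_eq hpool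
    refine ⟨fun j => if j = k + 1 then T else pc j, ?_, ?_, ?_⟩
    · simp only [if_neg (by omega : ¬ (0:ℕ) = k + 1)]; exact hpc0
    · intro j h1 h2
      by_cases hj : j = k + 1
      · simp only [hj, if_pos rfl]
        exact ⟨hTsub.trans Finset.sdiff_subset, hTc⟩
      · simp only [if_neg hj]
        exact hpcsub j h1 (by omega)
    · intro j hj
      by_cases hj1 : j + 1 = k + 1
      · have hj0 : ¬ j = k + 1 := by omega
        simp only [if_neg hj0, if_pos hj1]
        have hjk : j = k := by omega
        rw [hjk, Finset.disjoint_left]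
        intro x hx hxT
        have := hTsub hxT
        simp only [Finset.mem_sdiff] at this
        exact this.2 hx
      · simp only [if_neg (by omega : ¬ j = k + 1), if_neg hj1]
        exact hpcdis j (by omega)

private def clv (m p : ℕ) (c1 pc c2 : ℕ → Finset ℤ) (x : ℕ) : Finset ℤ :=
  if x < m then c1 x else if x < m + p - 1 then pc (x - m + 1) else c2 (x - (m + p - 1))

section Assemble
variable {m n p b : ℕ} {LL : ℕ → Finset ℤ} {c1 pc c2 : ℕ → Finset ℤ}

private lemma clv_c1 (i : ℕ) (hi : i < m) : clv m p c1 pc c2 i = c1 i :=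
  if_pos hi

private lemma clv_path (hm : 1 ≤ m) (hp : 1 ≤ p)
    (hc0 : pc 0 = c1 0) (hcp : pc p = c2 0) (j : ℕ) (hj : j ≤ p) :
    clv m p c1 pc c2 (pathV m p j) = pc j := by
  rcases Nat.eq_zero_or_pos j with h0 | h0
  · subst h0
    have : pathV m p 0 = 0 := by simp [pathV]
    rw [this, clv_c1 0 (by omega), hc0]
  · by_cases hjp : j = p
    · have h1 : pathV m p j = m + p - 1 := by
        simp only [pathV, if_neg (by omega : ¬ j = 0), if_pos hjp, if_neg (by omega : ¬ p = 0)]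
      rw [h1, hjp]
      unfold clv
      rw [if_neg (by omega), if_neg (by omega), Nat.sub_self, hcp]
    · have h1 : pathV m p j = m + j - 1 := by
        simp only [pathV, if_neg (by omega : ¬ j = 0), if_neg hjp]
      rw [h1]
      unfold clv
      rw [if_neg (by omega), if_pos (by omega)]
      congr 1
      omega

private lemma clv_cyc2 (hm : 1 ≤ m)
    (hc00 : p = 0 → c2 0 = c1 0) (j : ℕ) :
    clv m p c1 pc c2 (cyc2V m p j) = c2 j := by
  rcases Nat.eq_zero_or_pos j with h0 | h0
  · subst h0
    rcases Nat.eq_zero_or_pos p with hp0 | hp0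
    · have h1 : cyc2V m p 0 = 0 := by simp [cyc2V, hp0]
      rw [h1, clv_c1 0 (by omega), hc00 hp0]
    · have h1 : cyc2V m p 0 = m + p - 1 := by
        have hne : ¬ p = 0 := by omega
        simp [cyc2V, hne]
      rw [h1]
      unfold clv
      rw [if_neg (by omega), if_neg (by omega), Nat.sub_self]
  · have h1 : cyc2V m p j = m + p - 1 + j := by
      simp only [cyc2V, if_neg (by omega : ¬ j = 0)]
    rw [h1]
    unfold clv
    rw [if_neg (by omega), if_neg (by omega)]
    congr 1
    omega

private lemma assemble (hm : 3 ≤ m) (hn : 3 ≤ n)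
    (h1 : ∀ i < m, c1 i ⊆ LL i ∧ (c1 i).card = b)
    (h1d : ∀ i < m, Disjoint (c1 i) (c1 ((i + 1) % m)))
    (hp : ∀ j, 1 ≤ j → j ≤ p → pc j ⊆ LL (pathV m p j) ∧ (pc j).card = b)
    (hpd : ∀ j < p, Disjoint (pc j) (pc (j + 1)))
    (h2 : ∀ j < n, c2 j ⊆ LL (cyc2V m p j) ∧ (c2 j).card = b)
    (h2d : ∀ j < n, Disjoint (c2 j) (c2 ((j + 1) % n)))
    (hc0 : pc 0 = c1 0) (hcp : 1 ≤ p → pc p = c2 0) (hc00 : p = 0 → c2 0 = c1 0) :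
    (∀ x < m + n + p - 1, clv m p c1 pc c2 x ⊆ LL x ∧ (clv m p c1 pc c2 x).card = b) ∧
    (∀ x y, bgRel m n p x y → Disjoint (clv m p c1 pc c2 x) (clv m p c1 pc c2 y)) := by
  have hm1 : 1 ≤ m := by omega
  constructor
  · intro x hx
    by_cases hxm : x < m
    · rw [clv_c1 x hxm]; exact h1 x hxm
    · by_cases hxp : x < m + p - 1
      · have hp2 : 2 ≤ p := by omega
        have hj1 : 1 ≤ x - m + 1 ∧ x - m + 1 ≤ p - 1 := by omega
        have hpath : pathV m p (x - m + 1) = x := by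
          simp only [pathV, if_neg (by omega : ¬ x - m + 1 = 0),
            if_neg (by omega : ¬ x - m + 1 = p)]
          omega
        have := hp (x - m + 1) hj1.1 (by omega)
        rw [hpath] at this
        unfold clv
        rw [if_neg hxm, if_pos hxp]
        exact this
      · have hj : x - (m + p - 1) < n := by omega
        have hcyc : cyc2V m p (x - (m + p - 1)) = x := by
          rcases Nat.eq_zero_or_pos (x - (m + p - 1)) with h0 | h0
          · rw [h0]
            rcases Nat.eq_zero_or_pos p with hp0 | hp0
            · exfalso; omega
            · have hne : ¬ p = 0 := by omega
              have h1 : cyc2V m p 0 = m + p - 1 := by simp [cyc2V, hne]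
              rw [h1]
              omega
          · simp only [cyc2V, if_neg (by omega : ¬ x - (m + p - 1) = 0)]
            omega
        have := h2 (x - (m + p - 1)) hj
        rw [hcyc] at this
        unfold clv
        rw [if_neg hxm, if_neg hxp]
        exact this
  · rintro x y (⟨i, hi, hx, hy⟩ | ⟨j, hj, hx, hy⟩ | ⟨j, hj, hx, hy⟩) <;> rw [hx, hy]
    · rw [clv_c1 i hi, clv_c1 _ (Nat.mod_lt _ (by omega))]
      exact h1d i hi
    · have hp1 : 1 ≤ p := by omega
      rw [clv_path hm1 hp1 hc0 (hcp hp1) j (by omega),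
        clv_path hm1 hp1 hc0 (hcp hp1) (j + 1) (by omega)]
      exact hpd j hj
    · rw [clv_cyc2 hm1 hc00 j, clv_cyc2 hm1 hc00 ((j + 1) % n)]
      exact h2d j hj

end Assemble

private lemma pathV_lt (m n p j : ℕ) (hm : 3 ≤ m) (hn : 3 ≤ n) (hj : j ≤ p) :
    pathV m p j < m + n + p - 1 := by
  unfold pathV; split_ifs <;> omega

private lemma cyc2V_lt (m n p j : ℕ) (hm : 3 ≤ m) (hn : 3 ≤ n) (hj : j < n) :
    cyc2V m p j < m + n + p - 1 := by
  unfold cyc2V; split_ifs <;> omega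

private lemma pathV_zero (m p : ℕ) : pathV m p 0 = 0 := by simp [pathV]

private lemma pathV_last (m p : ℕ) (hp : 1 ≤ p) : pathV m p p = cyc2V m p 0 := by
  unfold pathV cyc2V; split_ifs <;> omega

private lemma finalize (m n p b : ℕ) (L : Fin (m + n + p - 1) → Finset ℤ)
    (LL : ℕ → Finset ℤ) (hLL : ∀ x (h : x < m + n + p - 1), LL x = L ⟨x, h⟩)
    (cl : ℕ → Finset ℤ)
    (hsub : ∀ x < m + n + p - 1, cl x ⊆ LL x ∧ (cl x).card = b)
    (hdis : ∀ x y, bgRel m n p x y → Disjoint (cl x) (cl y))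
    (v₀ : Fin (m + n + p - 1)) (c₀ : Finset ℤ) (hv : cl v₀.val = c₀) :
    ∃ c, IsLbColoring (binocularGraph m n p) L b c ∧ c v₀ = c₀ := by
  refine ⟨fun v => cl v.val, ⟨?_, ?_, ?_⟩, hv⟩
  · intro v
    have h := (hsub v.val v.isLt).1
    rwa [hLL v.val v.isLt, Fin.eta] at h
  · exact fun v => (hsub v.val v.isLt).2
  · intro v w hadj
    rw [binocularGraph, SimpleGraph.comap_adj, SimpleGraph.fromRel_adj] at hadj
    rcases hadj.2 with h | h
    · exact hdis _ _ h
    · exact (hdis _ _ h).symm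


/-- for `m, n ≥ 3`, `p ≥ 0` and `a/b ≥ 2 + 1/⌊min(m,n)/2⌋`, the
binocular graph BG(m,n,p) is free (a,b)-choosable. -/
theorem stmt14 (m n p : ℕ) (hm : 3 ≤ m) (hn : 3 ≤ n)
    (a b : ℕ) (ha : 0 < a) (hb : 0 < b)
    (hab : (a : ℚ) / b ≥ 2 + 1 / ((min m n / 2 : ℕ) : ℚ)) :
    FreeChoosable (binocularGraph m n p) a b := by
  intro L hLcard v₀ c₀ hc₀sub hc₀card
  -- Arithmetic consequences of `hab`
  have hminn : 3 ≤ min m n := le_min hm hn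
  have ht1 : 1 ≤ min m n / 2 := by omega
  have htQ : (0 : ℚ) < ((min m n / 2 : ℕ) : ℚ) := by exact_mod_cast ht1
  have hbQ : (0 : ℚ) < (b : ℚ) := by exact_mod_cast hb
  have h1 : (2 + 1 / ((min m n / 2 : ℕ) : ℚ)) * b ≤ a := (le_div_iff₀ hbQ).mp hab
  have h2b : 2 * b ≤ a := by
    have h : (2 : ℚ) * b ≤ a := by nlinarith [one_div_pos.mpr htQ]
    exact_mod_cast h
  have hinv : (1 / ((min m n / 2 : ℕ) : ℚ)) * ((min m n / 2 : ℕ) : ℚ) = 1 :=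
    one_div_mul_cancel (ne_of_gt htQ)
  have key : 2 * (b : ℚ) * ((min m n / 2 : ℕ) : ℚ) + b ≤ a * ((min m n / 2 : ℕ) : ℚ) := by
    nlinarith [mul_le_mul_of_nonneg_right h1 htQ.le]
  have keyN : 2 * b * (min m n / 2) + b ≤ a * (min m n / 2) := by exact_mod_cast key
  have het : b ≤ (a - 2 * b) * (min m n / 2) := by
    rw [Nat.sub_mul]
    exact Nat.le_sub_of_add_le (by omega)
  have hem : b ≤ (a - 2 * b) * (m / 2) :=
    le_trans het (Nat.mul_le_mul_left _ (Nat.div_le_div_right (min_le_left m n)))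
  have hen : b ≤ (a - 2 * b) * (n / 2) :=
    le_trans het (Nat.mul_le_mul_left _ (Nat.div_le_div_right (min_le_right m n)))
  set e : ℕ := a - 2 * b with he
  -- the lists, as a function on labels
  set LL : ℕ → Finset ℤ := fun x => if h : x < m + n + p - 1 then L ⟨x, h⟩ else ∅ with hLLdef
  have hLL : ∀ x (h : x < m + n + p - 1), LL x = L ⟨x, h⟩ := fun x h => dif_pos h
  have hLLa : ∀ x, x < m + n + p - 1 → 2 * b + e ≤ (LL x).card := by
    intro x h
    rw [hLL x h, hLcard]
    omega
  have hq : (v₀ : ℕ) < m + n + p - 1 := v₀.isLt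
  have hc₀LL : c₀ ⊆ LL v₀.val := by rw [hLL _ hq, Fin.eta]; exact hc₀sub
  have hLL1 : ∀ i < m, 2 * b + e ≤ (LL i).card := fun i hi => hLLa i (by omega)
  have hLL2 : ∀ j < n, 2 * b + e ≤ ((fun j => LL (cyc2V m p j)) j).card :=
    fun j hj => hLLa _ (cyc2V_lt m n p j hm hn hj)
  by_cases hA : v₀.val < m
  · -- v₀ lies on the first cycle
    obtain ⟨c1, hc1r, hc1sub, hc1dis⟩ :=
      cycle_free_rot b e m v₀.val hb hm hA hem LL hLL1 c₀ hc₀LL hc₀card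
    by_cases hp0 : p = 0
    · subst hp0
      have h00 : (cyc2V m 0 0) = 0 := by simp [cyc2V]
      obtain ⟨c2, hc2r, hc2sub, hc2dis⟩ :=
        cycle_free_rot b e n 0 hb hn (by omega) hen (fun j => LL (cyc2V m 0 j)) hLL2
          (c1 0) (by show c1 0 ⊆ LL (cyc2V m 0 0); rw [h00]; exact (hc1sub 0 (by omega)).1)
          (hc1sub 0 (by omega)).2
      obtain ⟨hsub, hdis⟩ := assemble (pc := fun _ => c1 0) hm hn hc1sub hc1dis
        (fun j hj1 hj2 => absurd (hj1.trans hj2) (by omega))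
        (fun j hj => absurd hj (by omega)) hc2sub hc2dis rfl
        (fun h => absurd h (by omega)) (fun _ => hc2r)
      exact finalize m n 0 b L LL hLL _ hsub hdis v₀ c₀ (by rw [clv_c1 _ hA]; exact hc1r)
    · have hp1 : 1 ≤ p := by omega
      obtain ⟨pc, hpc0, hpcsub, hpcdis⟩ :=
        path_greedy b (fun j => LL (pathV m p j)) (c1 0) (hc1sub 0 (by omega)).2 p
          (fun j hj1 hj2 => by
            show 2 * b ≤ (LL (pathV m p j)).card
            have := hLLa (pathV m p j) (pathV_lt m n p j hm hn hj2)
            omega)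
      have hpcp := hpcsub p hp1 le_rfl
      obtain ⟨c2, hc2r, hc2sub, hc2dis⟩ :=
        cycle_free_rot b e n 0 hb hn (by omega) hen (fun j => LL (cyc2V m p j)) hLL2
          (pc p) (by show pc p ⊆ LL (cyc2V m p 0); rw [← pathV_last m p hp1]; exact hpcp.1)
          hpcp.2
      obtain ⟨hsub, hdis⟩ := assemble hm hn hc1sub hc1dis hpcsub hpcdis hc2sub hc2dis
        hpc0 (fun _ => hc2r.symm) (fun h => absurd h hp0)
      exact finalize m n p b L LL hLL _ hsub hdis v₀ c₀ (by rw [clv_c1 _ hA]; exact hc1r)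
  · by_cases hB : v₀.val < m + p - 1
    · -- v₀ lies in the interior of the path
      have hp2 : 2 ≤ p := by omega
      set j₀ : ℕ := v₀.val - m + 1 with hj₀def
      have hj₀ : 1 ≤ j₀ ∧ j₀ ≤ p - 1 := by omega
      have hqv : pathV m p j₀ = v₀.val := by
        simp only [pathV, if_neg (show ¬ j₀ = 0 by omega), if_neg (show ¬ j₀ = p by omega)]
        omega
      obtain ⟨gpF, hF0, hFsub, hFdis⟩ :=
        path_greedy b (fun j => LL (pathV m p (j₀ + j))) c₀ hc₀card (p - j₀)
          (fun j hj1 hj2 => by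
            show 2 * b ≤ (LL (pathV m p (j₀ + j))).card
            have := hLLa (pathV m p (j₀ + j)) (pathV_lt m n p _ hm hn (by omega))
            omega)
      obtain ⟨gpB, hB0, hBsub, hBdis⟩ :=
        path_greedy b (fun j => LL (pathV m p (j₀ - j))) c₀ hc₀card j₀
          (fun j hj1 hj2 => by
            show 2 * b ≤ (LL (pathV m p (j₀ - j))).card
            have := hLLa (pathV m p (j₀ - j)) (pathV_lt m n p _ hm hn (by omega))
            omega)
      set pc : ℕ → Finset ℤ := fun j => if j ≤ j₀ then gpB (j₀ - j) else gpF (j - j₀) with hpcdef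
      have hpcj₀ : pc j₀ = c₀ := by
        simp only [hpcdef]
        rw [if_pos le_rfl, Nat.sub_self, hB0]
      have hpc0 : pc 0 = gpB j₀ := by
        simp only [hpcdef]
        rw [if_pos (Nat.zero_le _), Nat.sub_zero]
      have hpcp : pc p = gpF (p - j₀) := by
        simp only [hpcdef]
        rw [if_neg (by omega)]
      have hpsub : ∀ j, 1 ≤ j → j ≤ p → pc j ⊆ LL (pathV m p j) ∧ (pc j).card = b := by
        intro j hj1 hj2
        by_cases hj : j ≤ j₀
        · simp only [hpcdef]
          rw [if_pos hj]
          rcases eq_or_lt_of_le hj with heq | hlt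
          · rw [heq, Nat.sub_self, hB0, hqv]
            exact ⟨hc₀LL, hc₀card⟩
          · have h := hBsub (j₀ - j) (by omega) (by omega)
            have e1 : j₀ - (j₀ - j) = j := by omega
            rw [e1] at h
            exact h
        · simp only [hpcdef]
          rw [if_neg hj]
          have h := hFsub (j - j₀) (by omega) (by omega)
          have e1 : j₀ + (j - j₀) = j := by omega
          rw [e1] at h
          exact h
      have hpdis : ∀ j < p, Disjoint (pc j) (pc (j + 1)) := by
        intro j hj
        by_cases hj1 : j + 1 ≤ j₀
        · have h := (hBdis (j₀ - (j + 1)) (by omega)).symm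
          have e1 : j₀ - (j + 1) + 1 = j₀ - j := by omega
          rw [e1] at h
          simp only [hpcdef]
          rw [if_pos (by omega : j ≤ j₀), if_pos hj1]
          exact h
        · by_cases hjj : j ≤ j₀
          · have hjeq : j = j₀ := by omega
            have h := hFdis 0 (by omega)
            simp only [hpcdef]
            rw [if_pos hjj, if_neg hj1, hjeq, Nat.sub_self, hB0, ← hF0]
            have e1 : j₀ + 1 - j₀ = 0 + 1 := by omega
            rw [e1]
            exact h
          · have h := hFdis (j - j₀) (by omega)
            have e1 : j - j₀ + 1 = j + 1 - j₀ := by omega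
            rw [e1] at h
            simp only [hpcdef]
            rw [if_neg hjj, if_neg hj1]
            exact h
      have hgBp := hBsub j₀ (by omega) le_rfl
      have hgBp' : gpB j₀ ⊆ LL 0 := by
        have h := hgBp.1
        rwa [Nat.sub_self, pathV_zero] at h
      obtain ⟨c1, hc1r, hc1sub, hc1dis⟩ :=
        cycle_free_rot b e m 0 hb hm (by omega) hem LL hLL1 (gpB j₀) hgBp' hgBp.2
      have hgFp := hFsub (p - j₀) (by omega) le_rfl
      have hgFp' : gpF (p - j₀) ⊆ LL (cyc2V m p 0) := by
        have h := hgFp.1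
        have e1 : j₀ + (p - j₀) = p := by omega
        rw [e1] at h
        rwa [pathV_last m p (by omega)] at h
      obtain ⟨c2, hc2r, hc2sub, hc2dis⟩ :=
        cycle_free_rot b e n 0 hb hn (by omega) hen (fun j => LL (cyc2V m p j)) hLL2
          (gpF (p - j₀)) hgFp' hgFp.2
      obtain ⟨hsub, hdis⟩ := assemble hm hn hc1sub hc1dis hpsub hpdis hc2sub hc2dis
        (by rw [hpc0, hc1r]) (fun _ => by rw [hpcp, hc2r]) (fun h => absurd h (by omega))
      refine finalize m n p b L LL hLL _ hsub hdis v₀ c₀ ?_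
      have h := clv_path (m := m) (p := p) (c1 := c1) (pc := pc) (c2 := c2)
        (by omega) (by omega) (by rw [hpc0, hc1r]) (by rw [hpcp, hc2r]) j₀ (by omega)
      rw [hqv] at h
      rw [h, hpcj₀]
    · -- v₀ lies on the second cycle
      have hqm : m ≤ v₀.val := by omega
      have hqmp : m + p - 1 ≤ v₀.val := by omega
      set j₀ : ℕ := v₀.val - (m + p - 1) with hj₀def
      have hj₀n : j₀ < n := by omega
      have hqv : cyc2V m p j₀ = v₀.val := by
        unfold cyc2V; split_ifs <;> omega
      obtain ⟨c2, hc2r, hc2sub, hc2dis⟩ :=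
        cycle_free_rot b e n j₀ hb hn hj₀n hen (fun j => LL (cyc2V m p j)) hLL2
          c₀ (by show c₀ ⊆ LL (cyc2V m p j₀); rw [hqv]; exact hc₀LL) hc₀card
      have hc20 := hc2sub 0 (by omega)
      by_cases hp0 : p = 0
      · subst hp0
        have h00 : cyc2V m 0 0 = 0 := by simp [cyc2V]
        obtain ⟨c1, hc1r, hc1sub, hc1dis⟩ :=
          cycle_free_rot b e m 0 hb hm (by omega) hem LL hLL1 (c2 0)
            (by have h := hc20.1; rwa [h00] at h) hc20.2
        obtain ⟨hsub, hdis⟩ := assemble (pc := fun _ => c2 0) hm hn hc1sub hc1dis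
          (fun j hj1 hj2 => absurd (hj1.trans hj2) (by omega))
          (fun j hj => absurd hj (by omega)) hc2sub hc2dis hc1r.symm
          (fun h => absurd h (by omega)) (fun _ => hc1r.symm)
        refine finalize m n 0 b L LL hLL _ hsub hdis v₀ c₀ ?_
        have h := clv_cyc2 (m := m) (p := 0) (c1 := c1) (pc := fun _ => c2 0) (c2 := c2)
          (by omega) (fun _ => hc1r.symm) j₀
        rw [hqv] at h
        rw [h, hc2r]
      · have hp1 : 1 ≤ p := by omega
        obtain ⟨gpB, hB0, hBsub, hBdis⟩ :=
          path_greedy b (fun j => LL (pathV m p (p - j))) (c2 0) hc20.2 p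
            (fun j hj1 hj2 => by
              show 2 * b ≤ (LL (pathV m p (p - j))).card
              have := hLLa (pathV m p (p - j)) (pathV_lt m n p _ hm hn (by omega))
              omega)
        set pc : ℕ → Finset ℤ := fun j => gpB (p - j) with hpcdef
        have hpcp : pc p = c2 0 := by
          simp only [hpcdef]
          rw [Nat.sub_self, hB0]
        have hpsub : ∀ j, 1 ≤ j → j ≤ p → pc j ⊆ LL (pathV m p j) ∧ (pc j).card = b := by
          intro j hj1 hj2
          by_cases hjp : j = p
          · simp only [hpcdef]
            rw [hjp, Nat.sub_self, hB0, pathV_last m p hp1]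
            exact ⟨hc20.1, hc20.2⟩
          · have h := hBsub (p - j) (by omega) (by omega)
            have e1 : p - (p - j) = j := by omega
            rw [e1] at h
            simp only [hpcdef]
            exact h
        have hpdis : ∀ j < p, Disjoint (pc j) (pc (j + 1)) := by
          intro j hj
          have h := (hBdis (p - (j + 1)) (by omega)).symm
          have e1 : p - (j + 1) + 1 = p - j := by omega
          rw [e1] at h
          simp only [hpcdef]
          exact h
        have hgBp := hBsub p hp1 le_rfl
        have hgBp' : gpB p ⊆ LL 0 := by
          have h := hgBp.1
          rwa [Nat.sub_self, pathV_zero] at h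
        obtain ⟨c1, hc1r, hc1sub, hc1dis⟩ :=
          cycle_free_rot b e m 0 hb hm (by omega) hem LL hLL1 (gpB p) hgBp' hgBp.2
        have hpc0 : pc 0 = c1 0 := by
          simp only [hpcdef]
          rw [Nat.sub_zero, hc1r]
        obtain ⟨hsub, hdis⟩ := assemble hm hn hc1sub hc1dis hpsub hpdis hc2sub hc2dis
          hpc0 (fun _ => hpcp) (fun h => absurd h hp0)
        refine finalize m n p b L LL hLL _ hsub hdis v₀ c₀ ?_
        have h := clv_cyc2 (m := m) (p := p) (c1 := c1) (pc := pc) (c2 := c2)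
          (by omega) (fun h => absurd h hp0) j₀
        rw [hqv] at h
        rw [h, hc2r]
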